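/- (Subadditivity of the pile.) Let (α_k, σ_k), k ≥ 0, be jobs with 1 ≤ α_k ≤ s and σ_k ≥ 0, and for m ≤ n let H_{[m,n)} denote the pile obtained by applying the pile maps Ψ_{α_m,σ_m}, …, Ψ_{α_{n-1},σ_{n-1}} in order starting from the zero vector. Then for all m, n ≥ 0, |H_{[0,m+n)}|_∞ ≤ |H_{[0,m)}|_∞ + |H_{[m,m+n)}|_∞, where |·|_∞ denotes the maximum coordinate. -/

import Mathlib

/-- The nondecreasing rearrangement operator `R` on vectors of ℝ^s. -/
noncomputable def sortVec {s : ℕ} (v : Fin s → ℝ) : Fin s → ℝ := v ∘ Tuple.sort v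

/-- The all-ones vector `U`. -/
def Uvec (s : ℕ) : Fin s → ℝ := fun _ => 1

/-- `L(α)`: coordinate `i` is `1` if `i ≤ α` and `0` otherwise (indices 0-based,
so `α : Fin s` represents the number of requested servers `α+1 ∈ {1,…,s}`). -/
def Lvec {s : ℕ} (α : Fin s) : Fin s → ℝ := fun i => if i ≤ α then 1 else 0

/-- `S(α, W)`: coordinate `i` is `max (W^α) (W^i)`. -/
def Svec {s : ℕ} (α : Fin s) (W : Fin s → ℝ) : Fin s → ℝ := fun i => max (W α) (W i)

/-- A vector is ordered if its coordinates are nondecreasing and nonnegative. -/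
def IsOrdered {s : ℕ} (W : Fin s → ℝ) : Prop := Monotone W ∧ ∀ i, 0 ≤ W i

/-- The one-step MJSRE map `Φ_{α,σ,τ}(W) = R(S(α,W) + σ·L(α) − τ·U)⁺`. -/
noncomputable def Phi {s : ℕ} (α : Fin s) (σ τ : ℝ) (W : Fin s → ℝ) : Fin s → ℝ :=
  sortVec (fun i => max (Svec α W i + σ * Lvec α i - τ * Uvec s i) 0)

/-- The one-step pile map `Ψ_{α,σ}(W) = R(S(α,W) + σ·L(α))`. -/
noncomputable def Psi {s : ℕ} (α : Fin s) (σ : ℝ) (W : Fin s → ℝ) : Fin s → ℝ :=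
  sortVec (fun i => Svec α W i + σ * Lvec α i)

/-- `pileFrom a σf W m j` is the result `H_{[m, m+j)}(W)` of applying the pile maps
`Ψ_{α_m,σ_m}, …, Ψ_{α_{m+j-1},σ_{m+j-1}}` in order starting from the vector `W`. -/
noncomputable def pileFrom {s : ℕ} (a : ℕ → Fin s) (σf : ℕ → ℝ) (W : Fin s → ℝ) (m : ℕ) :
    ℕ → (Fin s → ℝ)
  | 0 => W
  | j + 1 => Psi (a (m + j)) (σf (m + j)) (pileFrom a σf W m j)

lemma sortVec_mono {s : ℕ} {v w : Fin s → ℝ} (h : v ≤ w) : sortVec v ≤ sortVec w := by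
  intro k
  by_contra hlt
  push_neg at hlt
  set c := sortVec v k with hc
  have hv : Monotone (v ∘ Tuple.sort v) := Tuple.monotone_sort v
  have hw : Monotone (w ∘ Tuple.sort w) := Tuple.monotone_sort w
  have hA : (Finset.univ.filter (fun i => v i < c)).card ≤ (k : ℕ) := by
    have himg : (Finset.univ.filter (fun i => v i < c))
        = (Finset.univ.filter (fun j => v (Tuple.sort v j) < c)).image (Tuple.sort v) := by
      ext i
      simp only [Finset.mem_filter, Finset.mem_image, Finset.mem_univ, true_and]
      constructor
      · intro hi
        exact ⟨(Tuple.sort v).symm i, by simpa using hi, by simp⟩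
      · rintro ⟨j, hj, rfl⟩; exact hj
    rw [himg, Finset.card_image_of_injective _ (Tuple.sort v).injective]
    calc (Finset.univ.filter (fun j => v (Tuple.sort v j) < c)).card
        ≤ (Finset.Iio k).card := by
          apply Finset.card_le_card
          intro j hj
          simp only [Finset.mem_filter] at hj
          rw [Finset.mem_Iio]
          by_contra hjk
          push_neg at hjk
          exact absurd (hv hjk) (not_le.mpr hj.2)
      _ = (k : ℕ) := Fin.card_Iio k
  have hC : (k : ℕ) + 1 ≤ (Finset.univ.filter (fun i => v i < c)).card := by
    have hsub : (Finset.Iic k).image (Tuple.sort w) ⊆ Finset.univ.filter (fun i => v i < c) := by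
      intro i hi
      simp only [Finset.mem_image, Finset.mem_Iic] at hi
      obtain ⟨j, hj, rfl⟩ := hi
      simp only [Finset.mem_filter, Finset.mem_univ, true_and]
      have h1 : w (Tuple.sort w j) ≤ sortVec w k := hw hj
      exact lt_of_le_of_lt (le_trans (h _) h1) hlt
    calc (k : ℕ) + 1 = (Finset.Iic k).card := (Fin.card_Iic k).symm
      _ = ((Finset.Iic k).image (Tuple.sort w)).card :=
          (Finset.card_image_of_injective _ (Tuple.sort w).injective).symm
      _ ≤ _ := Finset.card_le_card hsub
  omega

lemma sortVec_add_const {s : ℕ} (v : Fin s → ℝ) (c : ℝ) :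
    sortVec (fun i => v i + c) = fun i => sortVec v i + c := by
  set g : Fin s → ℝ := fun i => v i + c with hg
  have hmono : Monotone (g ∘ Tuple.sort v) := by
    intro i j hij
    simp only [Function.comp, hg]
    exact add_le_add_left (Tuple.monotone_sort v hij) c
  have := Tuple.comp_sort_eq_comp_iff_monotone.mpr hmono
  funext i
  calc sortVec g i = (g ∘ Tuple.sort g) i := rfl
    _ = (g ∘ Tuple.sort v) i := by rw [this]
    _ = sortVec v i + c := rfl

lemma sortVec_nonneg {s : ℕ} {v : Fin s → ℝ} (h : ∀ i, 0 ≤ v i) : ∀ i, 0 ≤ sortVec v i :=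
  fun i => h _

lemma Psi_mono {s : ℕ} (α : Fin s) (σ : ℝ) {W W' : Fin s → ℝ} (h : W ≤ W') :
    Psi α σ W ≤ Psi α σ W' := by
  apply sortVec_mono
  intro i
  exact add_le_add_left (max_le_max (h α) (h i)) _

lemma Psi_shift {s : ℕ} (α : Fin s) (σ : ℝ) (W : Fin s → ℝ) (c : ℝ) :
    Psi α σ (fun i => W i + c) = fun i => Psi α σ W i + c := by
  unfold Psi
  have h1 : (fun i => Svec α (fun j => W j + c) i + σ * Lvec α i)
      = fun i => (Svec α W i + σ * Lvec α i) + c := by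
    funext i
    simp only [Svec, max_add_add_right]
    ring
  rw [h1, sortVec_add_const]

lemma Psi_nonneg {s : ℕ} (α : Fin s) {σ : ℝ} (hσ : 0 ≤ σ) {W : Fin s → ℝ}
    (h : ∀ i, 0 ≤ W i) : ∀ i, 0 ≤ Psi α σ W i := by
  apply sortVec_nonneg
  intro i
  have h1 : 0 ≤ Svec α W i := le_max_of_le_left (h α)
  have h2 : 0 ≤ σ * Lvec α i := by
    apply mul_nonneg hσ
    unfold Lvec; split <;> norm_num
  linarith

lemma pileFrom_mono {s : ℕ} (a : ℕ → Fin s) (σf : ℕ → ℝ) {W W' : Fin s → ℝ}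
    (h : W ≤ W') (m n : ℕ) : pileFrom a σf W m n ≤ pileFrom a σf W' m n := by
  induction n with
  | zero => exact h
  | succ j ih => exact Psi_mono _ _ ih

lemma pileFrom_shift {s : ℕ} (a : ℕ → Fin s) (σf : ℕ → ℝ) (W : Fin s → ℝ) (c : ℝ)
    (m n : ℕ) :
    pileFrom a σf (fun i => W i + c) m n = fun i => pileFrom a σf W m n i + c := by
  induction n with
  | zero => rfl
  | succ j ih =>
    show Psi _ _ (pileFrom a σf (fun i => W i + c) m j) = _
    rw [ih, Psi_shift]
    rfl

lemma pileFrom_nonneg {s : ℕ} (a : ℕ → Fin s) (σf : ℕ → ℝ) (hσ : ∀ k, 0 ≤ σf k)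
    {W : Fin s → ℝ} (h : ∀ i, 0 ≤ W i) (m n : ℕ) : ∀ i, 0 ≤ pileFrom a σf W m n i := by
  induction n with
  | zero => exact h
  | succ j ih => exact Psi_nonneg _ (hσ _) ih

lemma pileFrom_comp {s : ℕ} (a : ℕ → Fin s) (σf : ℕ → ℝ) (W : Fin s → ℝ) (m n : ℕ) :
    pileFrom a σf W 0 (m + n) = pileFrom a σf (pileFrom a σf W 0 m) m n := by
  induction n with
  | zero => rfl
  | succ j ih =>
    show Psi (a (0 + (m + j))) (σf (0 + (m + j))) (pileFrom a σf W 0 (m + j)) = _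
    rw [ih]
    simp [Nat.zero_add]
    rfl

/-- Subadditivity of the pile: with `H_{[m,n)}` the pile built from jobs `m, …, n−1`
starting from the zero vector, one has
`|H_{[0,m+n)}|_∞ ≤ |H_{[0,m)}|_∞ + |H_{[m,m+n)}|_∞`. -/
theorem pile_subadditive (s : ℕ) (hs : 0 < s)
    (a : ℕ → Fin s) (σf : ℕ → ℝ) (hσ : ∀ k, 0 ≤ σf k) :
    ∀ m n : ℕ,
      (⨆ i, pileFrom a σf 0 0 (m + n) i)
        ≤ (⨆ i, pileFrom a σf 0 0 m i) + ⨆ i, pileFrom a σf 0 m n i := by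
  intro m n
  haveI : Nonempty (Fin s) := ⟨⟨0, hs⟩⟩
  set H := pileFrom a σf 0 0 m with hH
  set M := ⨆ i, H i with hM
  set N := ⨆ i, pileFrom a σf 0 m n i with hN
  have hbddH : BddAbove (Set.range H) := (Set.finite_range H).bddAbove
  have hbddP : BddAbove (Set.range (pileFrom a σf 0 m n)) :=
    (Set.finite_range _).bddAbove
  have hHM : ∀ i, H i ≤ M := fun i => le_ciSup hbddH i
  have hcomp : pileFrom a σf 0 0 (m + n) = pileFrom a σf H m n :=
    pileFrom_comp a σf 0 m n
  apply ciSup_le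
  intro i
  have key : pileFrom a σf H m n i ≤ pileFrom a σf 0 m n i + M := by
    have h1 : H ≤ fun j => (0 : Fin s → ℝ) j + M := by
      intro j; simpa using hHM j
    have h2 := pileFrom_mono a σf h1 m n i
    rwa [pileFrom_shift a σf 0 M m n] at h2
  calc pileFrom a σf 0 0 (m + n) i = pileFrom a σf H m n i := by rw [hcomp]
    _ ≤ pileFrom a σf 0 m n i + M := key
    _ ≤ N + M := add_le_add_left (le_ciSup hbddP i) M
    _ = M + N := add_comm _ _
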